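/- Let X and Y be metric spaces, each with exactly n points (n ≥ 2), and suppose there exists a structural isomorphism f : X → Y. Then d_GH(X,Y) ≤ ‖ν(X) − ν(Y)‖_∞. -/

import Mathlib

open scoped Classical

/-- The list of half-distances between unordered pairs of distinct points of a finite
metric space, arranged in ascending order: the vector `ν(X) ∈ ℝ^{n(n-1)/2}_∞`. -/
noncomputable def nuList (X : Type*) [MetricSpace X] [Fintype X] : List ℝ :=
  ((Finset.univ.filter fun p : Sym2 X => ¬ p.IsDiag).val.map
    (Sym2.lift ⟨fun x y => dist x y / 2, fun x y => by simp [dist_comm]⟩)).sort (· ≤ ·)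

/-- The `ℓ^∞` distance `‖ν(X) − ν(Y)‖_∞` between two vectors given as lists
(the maximum of coordinatewise absolute differences). -/
noncomputable def supDist (l₁ l₂ : List ℝ) : ℝ :=
  (List.zipWith (fun a b => |a - b|) l₁ l₂).foldr max 0

/-- The quantity `δ(X)`: for a space with at most two points, the distance between the
two points (i.e. the diameter); otherwise the least of the minimal triangle-inequality
defect and the minimal difference of distances of essentially distinct pairs. -/
noncomputable def deltaX (X : Type*) [MetricSpace X] [Fintype X] : ℝ :=
  if Fintype.card X ≤ 2 then Metric.diam (Set.univ : Set X)
  else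
    min
      (sInf {r : ℝ | ∃ x y z : X, x ≠ y ∧ y ≠ z ∧ x ≠ z ∧ r = dist x y + dist y z - dist x z})
      (sInf {r : ℝ | ∃ x y p q : X, x ≠ y ∧ p ≠ q ∧ 3 ≤ ({x, y, p, q} : Set X).ncard ∧
        r = |dist x y - dist p q|})

/-- A finite metric space is generic if all its nonzero distances are pairwise distinct
and all its triangle inequalities are strict. -/
def IsGenericSpace (X : Type*) [MetricSpace X] : Prop :=
  (∀ x y z w : X, x ≠ y → z ≠ w → dist x y = dist z w → ({x, y} : Set X) = {z, w}) ∧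
  (∀ x y z : X, x ≠ y → y ≠ z → x ≠ z → dist x z < dist x y + dist y z)

/-- A bijection between metric spaces is a structural isomorphism if it preserves the
order on the set of distances. -/
def IsStructuralIsomorphism {X Y : Type*} [MetricSpace X] [MetricSpace Y] (f : X ≃ Y) : Prop :=
  ∀ x y z w : X, dist x y ≤ dist z w ↔ dist (f x) (f y) ≤ dist (f z) (f w)

/-- The distortion of a relation between two metric spaces. -/
noncomputable def relDis {X Y : Type*} [MetricSpace X] [MetricSpace Y]
    (R : Set (X × Y)) : ℝ :=
  sSup {r : ℝ | ∃ p ∈ R, ∃ q ∈ R, r = |dist p.1 q.1 - dist p.2 q.2|}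

lemma le_foldr_max {l : List ℝ} {a : ℝ} (h : a ∈ l) : a ≤ l.foldr max 0 := by
  induction l with
  | nil => simp at h
  | cons b t ih =>
    rcases List.mem_cons.1 h with rfl | h
    · exact le_max_left _ _
    · exact le_trans (ih h) (le_max_right _ _)

lemma foldr_max_nonneg (l : List ℝ) : 0 ≤ l.foldr max 0 := by
  induction l with
  | nil => simp
  | cons b t ih => exact le_trans ih (le_max_right _ _)

lemma zipWith_abs_map {α : Type*} (V W : α → ℝ) (l : List α) :
    List.zipWith (fun a b => |a - b|) (l.map V) (l.map W)
      = l.map (fun p => |V p - W p|) := by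
  induction l with
  | nil => simp
  | cons b t ih => simp [ih]

lemma abs_sub_le_supDist_sort {α : Type*} (S : Multiset α) (V W : α → ℝ)
    (hVW : ∀ p q, V p ≤ V q ↔ W p ≤ W q) {p : α} (hp : p ∈ S) :
    |V p - W p| ≤ supDist ((S.map V).sort (· ≤ ·)) ((S.map W).sort (· ≤ ·)) := by
  set l := S.toList.mergeSort (fun a b => decide (V a ≤ V b)) with hl
  have hperm : l.Perm S.toList := List.mergeSort_perm _ _
  have hcoe : (l : Multiset α) = S := by
    rw [Multiset.coe_eq_coe.2 hperm, Multiset.coe_toList]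
  have hsortV : l.Pairwise (fun a b => V a ≤ V b) := by
    have := List.pairwise_mergeSort (le := fun a b => decide (V a ≤ V b))
      (fun a b c hab hbc => by simp at *; linarith)
      (fun a b => by simpa using le_total (V a) (V b)) S.toList
    simpa using this
  have hsortW : l.Pairwise (fun a b => W a ≤ W b) := hsortV.imp (fun h => (hVW _ _).1 h)
  have hA : (S.map V).sort (· ≤ ·) = l.map V := by
    refine (fun hp h1 h2 => List.Perm.eq_of_pairwise' (r := (· ≤ ·)) h1 h2 hp) ?_ ?_ ?_
    · apply Multiset.coe_eq_coe.1
      rw [Multiset.sort_eq, ← hcoe, Multiset.map_coe]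
    · exact Multiset.pairwise_sort _ _
    · exact List.pairwise_map.2 hsortV
  have hB : (S.map W).sort (· ≤ ·) = l.map W := by
    refine (fun hp h1 h2 => List.Perm.eq_of_pairwise' (r := (· ≤ ·)) h1 h2 hp) ?_ ?_ ?_
    · apply Multiset.coe_eq_coe.1
      rw [Multiset.sort_eq, ← hcoe, Multiset.map_coe]
    · exact Multiset.pairwise_sort _ _
    · exact List.pairwise_map.2 hsortW
  rw [hA, hB, supDist, zipWith_abs_map]
  apply le_foldr_max
  apply List.mem_map_of_mem
  rw [hperm.mem_iff, Multiset.mem_toList]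
  exact hp

/-- If two `n`-point metric spaces (`n ≥ 2`) are structurally isomorphic, then their
Gromov–Hausdorff distance is at most `‖ν(X) − ν(Y)‖_∞`. -/
theorem ghDist_le_supDist_of_structural_isomorphism
    (n : ℕ) (hn : 2 ≤ n)
    (X Y : Type) [MetricSpace X] [Fintype X] [Nonempty X] [MetricSpace Y] [Fintype Y] [Nonempty Y]
    (hX : Fintype.card X = n) (hY : Fintype.card Y = n)
    (f : X ≃ Y) (hf : IsStructuralIsomorphism f) :
    GromovHausdorff.ghDist X Y ≤ supDist (nuList X) (nuList Y) := by
  set V : Sym2 X → ℝ :=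
    Sym2.lift ⟨fun x y => dist x y / 2, fun x y => by simp [dist_comm]⟩ with hV
  set W : Sym2 Y → ℝ :=
    Sym2.lift ⟨fun x y => dist x y / 2, fun x y => by simp [dist_comm]⟩ with hW
  set g : Sym2 X → Sym2 Y := Sym2.map f with hg
  set S : Multiset (Sym2 X) := (Finset.univ.filter fun p : Sym2 X => ¬ p.IsDiag).val with hS
  -- the equivalence on Sym2
  let e : Sym2 X ≃ Sym2 Y :=
    ⟨Sym2.map f, Sym2.map f.symm,
      fun p => by simp [Sym2.map_map, Function.comp_def],
      fun p => by simp [Sym2.map_map, Function.comp_def]⟩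
  have hmulti : (Finset.univ.filter fun p : Sym2 Y => ¬ p.IsDiag).val = S.map g := by
    rw [hS, ← Finset.map_univ_equiv e, Finset.filter_map]
    have hfilter : (Finset.univ.filter ((fun p : Sym2 Y => ¬ p.IsDiag) ∘ ⇑(e.toEmbedding)))
        = Finset.univ.filter fun p : Sym2 X => ¬ p.IsDiag := by
      apply Finset.filter_congr
      intro p _
      have : ((fun p : Sym2 Y => ¬ p.IsDiag) ∘ ⇑(e.toEmbedding)) p ↔ ¬ (Sym2.map f p).IsDiag :=
        Iff.rfl
      rw [this, not_iff_not]
      exact Sym2.isDiag_map f.injective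
    rw [hfilter, Finset.map_val]
    rfl
  have hnuY : nuList Y = (S.map (fun p => W (g p))).sort (· ≤ ·) := by
    rw [nuList, hmulti, Multiset.map_map]
    rfl
  have hVW : ∀ p q : Sym2 X, V p ≤ V q ↔ W (g p) ≤ W (g q) := by
    intro p q
    induction p using Sym2.ind with
    | _ x y =>
      induction q using Sym2.ind with
      | _ z w =>
        simp only [hV, hW, hg, Sym2.map_pair_eq, Sym2.lift_mk]
        constructor <;> intro h
        · have := (hf x y z w).1 (by linarith)
          linarith
        · have := (hf x y z w).2 (by linarith)
          linarith
  set D : ℝ := supDist (nuList X) (nuList Y) with hD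
  have hD0 : 0 ≤ D := foldr_max_nonneg _
  have key : ∀ x y : X, |dist x y - dist (f x) (f y)| ≤ 2 * D := by
    intro x y
    rcases eq_or_ne x y with rfl | hxy
    · simp only [dist_self, abs_zero, sub_self]
      · linarith
    · have hp : s(x, y) ∈ S := by
        rw [hS]
        simp [Finset.mem_filter, Sym2.mk_isDiag_iff, hxy]
      have := abs_sub_le_supDist_sort S V (fun p => W (g p)) hVW hp
      rw [← hnuY] at this
      have hnuX : nuList X = (S.map V).sort (· ≤ ·) := rfl
      rw [← hnuX] at this
      have hVp : V s(x, y) = dist x y / 2 := by simp [hV]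
      have hWp : W (g s(x, y)) = dist (f x) (f y) / 2 := by
        simp [hW, hg, Sym2.map_pair_eq]
      simp only [hVp, hWp] at this
      have habs : |dist x y / 2 - dist (f x) (f y) / 2|
          = |dist x y - dist (f x) (f y)| / 2 := by
        rw [← sub_div, abs_div, abs_two]
      rw [habs] at this
      linarith
  have h0 : GromovHausdorff.ghDist X Y ≤ 0 + 2 * D / 2 + 0 := by
    apply GromovHausdorff.ghDist_le_of_approx_subsets
      (s := (Set.univ : Set X)) (fun x => f x.1)
    · intro x
      exact ⟨x, Set.mem_univ x, by simp⟩
    · intro y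
      exact ⟨⟨f.symm y, Set.mem_univ _⟩, by simp⟩
    · intro x y
      rw [Subtype.dist_eq]
      exact key x.1 y.1
  rw [hD]
  linarith [h0]
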